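/- Let X be a noetherian sober topological space (every nonempty irreducible closed subset has a unique generic point), and let Y ⊆ X be a subset stable under generization, i.e., if y ∈ Y and y lies in the closure of {x}, then x ∈ Y. Give Y the subspace topology and let f : Y → X be the inclusion. Then for every flabby sheaf F of abelian groups on X, the pullback (restriction) sheaf f⁻¹F on Y is flabby. -/

import Mathlib

open CategoryTheory TopologicalSpace

set_option synthInstance.maxHeartbeats 1000000
set_option maxHeartbeats 4000000

/-- A presheaf of abelian groups is flabby (flasque) if for every open `U` the restriction
map from global sections `F(X) → F(U)` is surjective. -/
def IsFlabby {X : TopCat} (F : TopCat.Presheaf Ab X) : Prop :=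
  ∀ U : Opens X, Function.Surjective (F.map (homOfLE (le_top : U ≤ ⊤)).op)

/-- The inclusion of a subset `Y ⊆ X` (with the subspace topology) as a morphism of
topological spaces. -/
def subsetIncl (X : TopCat) (Y : Set X) : TopCat.of Y ⟶ X :=
  TopCat.ofHom ⟨Subtype.val, continuous_subtype_val⟩

namespace Stmt2Aux

open Opposite CategoryTheory.Limits

universe u

lemma core_topo {X : Type*} [TopologicalSpace X] [NoetherianSpace X]
    [QuasiSober X] (Y : Set X)
    (hY : ∀ y ∈ Y, ∀ x : X, y ∈ closure ({x} : Set X) → x ∈ Y)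
    (O E : Set X) (hO : IsOpen O) (hE : IsOpen E) (hOY : O ∩ Y ⊆ E) :
    closure (O \ E) ∩ Y = ∅ := by
  have key : ∀ T : Closeds X, (T : Set X) ⊆ Eᶜ → closure ((T : Set X) ∩ O) = T →
      (T : Set X) ∩ Y = ∅ := by
    intro T
    induction T using (wellFounded_lt (α := Closeds X)).induction with
    | _ T ih =>
      intro hTE hTO
      rcases Set.eq_empty_or_nonempty ((T : Set X) ∩ O) with hemp | hne
      · rw [hemp, closure_empty] at hTO
        rw [← hTO]; simp
      by_cases hirr : IsPreirreducible (T : Set X)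
      · have hTne : (T : Set X).Nonempty := hne.mono Set.inter_subset_left
        have hI : IsIrreducible (T : Set X) := ⟨hTne, hirr⟩
        obtain ⟨η, hη⟩ : ∃ η, closure ({η} : Set X) = (T : Set X) :=
          ⟨hI.genericPoint, by
            simpa [IsGenericPoint] using
              hI.isGenericPoint_genericPoint_closure.def.trans T.isClosed.closure_eq⟩
        obtain ⟨b, hbT, hbO⟩ := hne
        have hηO : η ∈ O := by
          have : b ∈ closure ({η} : Set X) := by rw [hη]; exact hbT
          rcases mem_closure_iff.mp this O hO hbO with ⟨z, hzO, hz⟩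
          rwa [Set.mem_singleton_iff.mp hz] at hzO
        have hηT : η ∈ (T : Set X) := by rw [← hη]; exact subset_closure rfl
        have hηY : η ∉ Y := fun hmem => hTE hηT (hOY ⟨hηO, hmem⟩)
        ext y; simp only [Set.mem_inter_iff, Set.mem_empty_iff_false, iff_false, not_and]
        intro hyT hyY
        exact hηY (hY y hyY η (by rw [hη]; exact hyT))
      · rw [isPreirreducible_iff_isClosed_union_isClosed] at hirr
        push_neg at hirr
        obtain ⟨C1, C2, hC1, hC2, hsub, hn1, hn2⟩ := hirr
        set T1 : Closeds X := ⟨closure ((T : Set X) ∩ C1 ∩ O), isClosed_closure⟩ with hT1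
        set T2 : Closeds X := ⟨closure ((T : Set X) ∩ C2 ∩ O), isClosed_closure⟩ with hT2
        have hsub1 : (T1 : Set X) ⊆ (T : Set X) ∩ C1 :=
          closure_minimal (fun x hx => hx.1) (T.isClosed.inter hC1)
        have hsub2 : (T2 : Set X) ⊆ (T : Set X) ∩ C2 :=
          closure_minimal (fun x hx => hx.1) (T.isClosed.inter hC2)
        have hlt1 : T1 < T := by
          refine lt_of_le_of_ne (fun x hx => (hsub1 hx).1) fun h => hn1 ?_
          intro x hx
          exact (hsub1 (by rw [h]; exact hx)).2
        have hlt2 : T2 < T := by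
          refine lt_of_le_of_ne (fun x hx => (hsub2 hx).1) fun h => hn2 ?_
          intro x hx
          exact (hsub2 (by rw [h]; exact hx)).2
        have h1 : (T1 : Set X) ∩ Y = ∅ := by
          refine ih T1 hlt1 (fun x hx => hTE (hsub1 hx).1) ?_
          refine subset_antisymm (closure_minimal (fun x hx => hx.1) T1.isClosed) ?_
          exact closure_mono fun x hx => ⟨subset_closure hx, hx.2⟩
        have h2 : (T2 : Set X) ∩ Y = ∅ := by
          refine ih T2 hlt2 (fun x hx => hTE (hsub2 hx).1) ?_
          refine subset_antisymm (closure_minimal (fun x hx => hx.1) T2.isClosed) ?_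
          exact closure_mono fun x hx => ⟨subset_closure hx, hx.2⟩
        have hcover : (T : Set X) ⊆ (T1 : Set X) ∪ (T2 : Set X) := by
          have hss : ((T : Set X) ∩ O) ⊆ ((T : Set X) ∩ C1 ∩ O) ∪ ((T : Set X) ∩ C2 ∩ O) := by
            intro x hx
            rcases hsub hx.1 with h | h
            · exact Or.inl ⟨⟨hx.1, h⟩, hx.2⟩
            · exact Or.inr ⟨⟨hx.1, h⟩, hx.2⟩
          calc (T : Set X) = closure ((T : Set X) ∩ O) := hTO.symm
            _ ⊆ closure (((T : Set X) ∩ C1 ∩ O) ∪ ((T : Set X) ∩ C2 ∩ O)) := closure_mono hss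
            _ = (T1 : Set X) ∪ (T2 : Set X) := closure_union
        ext y; simp only [Set.mem_inter_iff, Set.mem_empty_iff_false, iff_false, not_and]
        intro hyT hyY
        rcases hcover hyT with h | h
        · exact (h1 ▸ (⟨h, hyY⟩ : y ∈ (T1 : Set X) ∩ Y) : y ∈ (∅ : Set X))
        · exact (h2 ▸ (⟨h, hyY⟩ : y ∈ (T2 : Set X) ∩ Y) : y ∈ (∅ : Set X))
  refine key ⟨closure (O \ E), isClosed_closure⟩
    (closure_minimal (fun x hx => hx.2) (isClosed_compl_iff.mpr hE)) ?_
  refine subset_antisymm (closure_minimal (fun x hx => hx.1) isClosed_closure) ?_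
  exact closure_mono fun x hx => ⟨subset_closure hx, hx.1⟩

variable {X : TopCat.{u}} {Y : Set X}

lemma hom_eq {Z : TopCat.{u}} {a b : (Opens Z)ᵒᵖ} (g g' : a ⟶ b) : g = g' :=
  Subsingleton.elim g g'

lemma hom_eq' {Z : TopCat.{u}} {a b : Opens Z} (g g' : a ⟶ b) : g = g' :=
  Subsingleton.elim g g'

lemma pmap_trans {Z : TopCat.{u}} (Q : TopCat.Presheaf Ab Z) {a b c : Opens Z}
    (h1 : b ≤ a) (h2 : c ≤ b) (h3 : c ≤ a) (x : Q.obj (op a)) :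
    Q.map (homOfLE h2).op (Q.map (homOfLE h1).op x) = Q.map (homOfLE h3).op x := by
  rw [hom_eq (homOfLE h3).op ((homOfLE h1).op ≫ (homOfLE h2).op), Q.map_comp]
  rfl

lemma pmap_id {Z : TopCat.{u}} (Q : TopCat.Presheaf Ab Z) {a : Opens Z}
    (h : a ≤ a) (x : Q.obj (op a)) : Q.map (homOfLE h).op x = x := by
  rw [hom_eq (homOfLE h).op (𝟙 (op a)), Q.map_id]
  rfl

lemma app_nat {Z : TopCat.{u}} {Q R : TopCat.Presheaf Ab Z} (θ : Q ⟶ R) {a b : (Opens Z)ᵒᵖ}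
    (g : a ⟶ b) (x : Q.obj a) : θ.app b (Q.map g x) = R.map g (θ.app a x) := by
  have := ConcreteCategory.congr_hom (θ.naturality g) x
  exact this

variable (Y) in
noncomputable abbrev P (ℱ : TopCat.Presheaf Ab X) : TopCat.Presheaf Ab (TopCat.of Y) :=
  (Opens.map (subsetIncl X Y)).op.lan.obj ℱ

variable (Y) in
noncomputable abbrev ηu (ℱ : TopCat.Presheaf Ab X) :
    ℱ ⟶ (Opens.map (subsetIncl X Y)).op ⋙ P Y ℱ :=
  (Opens.map (subsetIncl X Y)).op.lanUnit.app ℱ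

variable (ℱ : TopCat.Presheaf Ab X)

lemma unit_res (U U' : Opens X) (hUU' : U' ≤ U) (V₀ : Opens (TopCat.of Y))
    (h : V₀ ≤ (Opens.map (subsetIncl X Y)).obj U')
    (h' : V₀ ≤ (Opens.map (subsetIncl X Y)).obj U) (s : ℱ.obj (op U)) :
    (P Y ℱ).map (homOfLE h').op ((ηu Y ℱ).app (op U) s)
      = (P Y ℱ).map (homOfLE h).op ((ηu Y ℱ).app (op U') (ℱ.map (homOfLE hUU').op s)) := by
  have hnat := ConcreteCategory.congr_hom ((ηu Y ℱ).naturality (homOfLE hUU').op) s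
  have h2 : (ηu Y ℱ).app (op U') (ℱ.map (homOfLE hUU').op s)
      = (P Y ℱ).map ((Opens.map (subsetIncl X Y)).op.map (homOfLE hUU').op)
          ((ηu Y ℱ).app (op U) s) := hnat
  rw [h2]
  have h3 : ((Opens.map (subsetIncl X Y)).op.map (homOfLE hUU').op ≫ (homOfLE h).op)
      = (homOfLE h').op := hom_eq _ _
  rw [← h3, (P Y ℱ).map_comp]
  rfl

noncomputable def hcolim (V : Opens (TopCat.of Y)) :
    IsColimit ((Functor.LeftExtension.mk (P Y ℱ) (ηu Y ℱ)).coconeAt (op V)) :=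
  Functor.isPointwiseLeftKanExtensionOfIsLeftKanExtension (P Y ℱ) (ηu Y ℱ) (op V)

lemma mem_of_isColimit {J : Type*} [Category J] {D : J ⥤ Ab} {c : Cocone D}
    (hc : IsColimit c) (S : AddSubgroup c.pt)
    (hS : ∀ (j : J) (y : D.obj j), c.ι.app j y ∈ S) (x : c.pt) : x ∈ S := by
  let q : c.pt ⟶ AddCommGrpCat.of (c.pt ⧸ S) := AddCommGrpCat.ofHom (QuotientAddGroup.mk' S)
  have hq : q = 0 := by
    apply hc.hom_ext
    intro j
    ext y
    show QuotientAddGroup.mk' S (c.ι.app j y) = (0 : (c.pt : Type _) ⧸ S)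
    rw [QuotientAddGroup.mk'_apply, QuotientAddGroup.eq_zero_iff]
    exact hS j y
  have h2 : QuotientAddGroup.mk' S x = (0 : (c.pt : Type _) ⧸ S) := by
    have h3 := ConcreteCategory.congr_hom hq x
    have hz : ((0 : c.pt ⟶ AddCommGrpCat.of (c.pt ⧸ S))) x = 0 := rfl
    rw [hz] at h3
    exact h3
  rwa [QuotientAddGroup.mk'_apply, QuotientAddGroup.eq_zero_iff] at h2

lemma exists_rep (V : Opens (TopCat.of Y)) (x : (P Y ℱ).obj (op V)) :
    ∃ (U : Opens X) (hUV : V ≤ (Opens.map (subsetIncl X Y)).obj U) (s : ℱ.obj (op U)),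
      x = (P Y ℱ).map (homOfLE hUV).op ((ηu Y ℱ).app (op U) s) := by
  let S : AddSubgroup ((P Y ℱ).obj (op V)) :=
    { carrier := {x | ∃ (U : Opens X) (hUV : V ≤ (Opens.map (subsetIncl X Y)).obj U)
        (s : ℱ.obj (op U)), x = (P Y ℱ).map (homOfLE hUV).op ((ηu Y ℱ).app (op U) s)}
      zero_mem' := by
        refine ⟨⊤, fun y _ => trivial, 0, ?_⟩
        rw [map_zero, map_zero]
      add_mem' := by
        rintro x1 x2 ⟨U1, h1, s1, rfl⟩ ⟨U2, h2, s2, rfl⟩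
        have h12 : V ≤ (Opens.map (subsetIncl X Y)).obj (U1 ⊓ U2) :=
          fun y hy => ⟨h1 hy, h2 hy⟩
        refine ⟨U1 ⊓ U2, h12, ℱ.map (homOfLE inf_le_left).op s1
          + ℱ.map (homOfLE inf_le_right).op s2, ?_⟩
        rw [map_add, map_add]
        rw [unit_res ℱ U1 (U1 ⊓ U2) inf_le_left V h12 h1 s1,
          unit_res ℱ U2 (U1 ⊓ U2) inf_le_right V h12 h2 s2]
      neg_mem' := by
        rintro x ⟨U, h, s, rfl⟩
        refine ⟨U, h, -s, ?_⟩
        rw [map_neg, map_neg] }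
  have hS : ∀ (j : CostructuredArrow (Opens.map (subsetIncl X Y)).op (op V))
      (y : ℱ.obj j.left),
      ((Functor.LeftExtension.mk (P Y ℱ) (ηu Y ℱ)).coconeAt (op V)).ι.app j y ∈ S := by
    intro j y
    refine ⟨unop j.left, leOfHom j.hom.unop, y, ?_⟩
    show ((ηu Y ℱ).app j.left ≫ (P Y ℱ).map j.hom) y = _
    rw [hom_eq j.hom (homOfLE (leOfHom j.hom.unop)).op]
    rfl
  exact mem_of_isColimit (hcolim ℱ V) S hS x

lemma exists_desc (V : Opens (TopCat.of Y)) (y : TopCat.of Y) (hy : y ∈ V) :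
    ∃ ψ : (P Y ℱ).obj (op V) ⟶ ℱ.stalk (subsetIncl X Y y),
      ∀ (U : Opens X) (hUV : V ≤ (Opens.map (subsetIncl X Y)).obj U) (s : ℱ.obj (op U)),
        ψ ((P Y ℱ).map (homOfLE hUV).op ((ηu Y ℱ).app (op U) s))
          = ℱ.germ U (subsetIncl X Y y) (hUV hy) s := by
  let cc : Cocone (CostructuredArrow.proj (Opens.map (subsetIncl X Y)).op (op V) ⋙ ℱ) :=
    { pt := ℱ.stalk (subsetIncl X Y y)
      ι :=
        { app := fun j => ℱ.germ (unop j.left) (subsetIncl X Y y) (leOfHom j.hom.unop hy)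
          naturality := fun j j' g => by
            simp only [Functor.const_obj_map, Category.comp_id, Functor.comp_map,
              CostructuredArrow.proj_map]
            exact ℱ.germ_res' g.left (subsetIncl X Y y) (leOfHom j'.hom.unop hy) } }
  refine ⟨(hcolim ℱ V).desc cc, ?_⟩
  intro U hUV s
  have hfac := (hcolim ℱ V).fac cc (CostructuredArrow.mk (homOfLE hUV).op)
  exact ConcreteCategory.congr_hom hfac s

end Stmt2Aux

open Opposite Stmt2Aux in
/-- Let `X` be a noetherian sober space and `Y ⊆ X` a subset stable under
generization, with subspace topology and inclusion `f : Y → X`.  For every flabby sheaf `F`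
of abelian groups on `X`, the pullback sheaf `f⁻¹F` on `Y` is flabby. -/
theorem stmt_2 (X : TopCat) [TopologicalSpace.NoetherianSpace X] [QuasiSober X] [T0Space X]
    (Y : Set X)
    (hY : ∀ y ∈ Y, ∀ x : X, (y : X) ∈ closure ({x} : Set X) → x ∈ Y)
    (F : TopCat.Sheaf Ab X) (hF : IsFlabby F.val) :
    IsFlabby ((TopCat.Sheaf.pullback Ab (subsetIncl X Y)).obj F).val := by
  classical
  intro V
  let J := Opens.grothendieckTopology (TopCat.of (Y : Set X))
  let ℱ : TopCat.Presheaf Ab X := F.val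
  let Pp := Stmt2Aux.P Y ℱ
  let G : TopCat.Sheaf Ab (TopCat.of (Y : Set X)) := (presheafToSheaf J Ab).obj Pp
  let θ : Pp ⟶ G.val := CategoryTheory.toSheafify J Pp
  suffices hG : Function.Surjective (G.val.map (homOfLE (le_top : V ≤ ⊤)).op) by
    let e := (TopCat.Sheaf.pullbackIso Ab (subsetIncl X Y)).app F
    intro t'
    obtain ⟨s, hs⟩ := hG (e.hom.hom.app (op V) t')
    refine ⟨e.inv.hom.app (op ⊤) s, ?_⟩
    have hn := Stmt2Aux.app_nat e.inv.hom (homOfLE (le_top : V ≤ ⊤)).op s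
    have h1 := congrArg (fun φ => φ.hom.app (op V)) e.hom_inv_id
    exact hn.symm.trans ((congrArg (fun z => e.inv.hom.app (op V) z) hs).trans
      (ConcreteCategory.congr_hom h1 t'))
  intro t
  have step1 : ∀ y : {y : TopCat.of (Y : Set X) // y ∈ V},
      ∃ (U : Opens X) (s : ℱ.obj (Opposite.op U))
        (hUV : (Opens.map (subsetIncl X Y)).obj U ≤ V)
        (_ : (y : TopCat.of (Y : Set X)) ∈ (Opens.map (subsetIncl X Y)).obj U),
        θ.app (Opposite.op ((Opens.map (subsetIncl X Y)).obj U)) ((Stmt2Aux.ηu Y ℱ).app (Opposite.op U) s)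
          = G.val.map (homOfLE hUV).op t := by
    rintro ⟨y, hy⟩
    have hmem := CategoryTheory.Presheaf.imageSieve_mem J θ t
    obtain ⟨V', g, hg, hyV'⟩ := hmem y hy
    obtain ⟨p, hp⟩ := hg
    obtain ⟨U₀, hU₀, s₀, rfl⟩ := Stmt2Aux.exists_rep ℱ V' p
    obtain ⟨w, hw, hw2⟩ := isOpen_induced_iff.mp V'.isOpen
    have hW : (Opens.map (subsetIncl X Y)).obj ⟨w, hw⟩ = V' := Opens.ext hw2
    have hle1 : (Opens.map (subsetIncl X Y)).obj (U₀ ⊓ ⟨w, hw⟩)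
        ≤ (Opens.map (subsetIncl X Y)).obj U₀ :=
      leOfHom ((Opens.map (subsetIncl X Y)).map (homOfLE inf_le_left))
    have hle2 : (Opens.map (subsetIncl X Y)).obj (U₀ ⊓ ⟨w, hw⟩) ≤ V' :=
      le_of_le_of_eq (leOfHom ((Opens.map (subsetIncl X Y)).map (homOfLE inf_le_right))) hW
    have hUV : (Opens.map (subsetIncl X Y)).obj (U₀ ⊓ ⟨w, hw⟩) ≤ V :=
      hle2.trans (leOfHom g)
    refine ⟨U₀ ⊓ ⟨w, hw⟩, ℱ.map (homOfLE inf_le_left).op s₀, hUV,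
      ⟨hU₀ hyV', le_of_eq hW.symm hyV'⟩, ?_⟩
    have e1 : (Stmt2Aux.ηu Y ℱ).app (op (U₀ ⊓ ⟨w, hw⟩)) (ℱ.map (homOfLE inf_le_left).op s₀)
        = Pp.map (homOfLE hle1).op ((Stmt2Aux.ηu Y ℱ).app (op U₀) s₀) := by
      have h0 := Stmt2Aux.unit_res ℱ U₀ (U₀ ⊓ ⟨w, hw⟩) inf_le_left
        ((Opens.map (subsetIncl X Y)).obj (U₀ ⊓ ⟨w, hw⟩)) le_rfl hle1 s₀
      rw [Stmt2Aux.pmap_id] at h0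
      exact h0.symm
    rw [e1]
    have e2 := Stmt2Aux.pmap_trans Pp hU₀ hle2 hle1 ((Stmt2Aux.ηu Y ℱ).app (op U₀) s₀)
    rw [← e2]
    have e3 := Stmt2Aux.app_nat θ (homOfLE hle2).op
      (Pp.map (homOfLE hU₀).op ((Stmt2Aux.ηu Y ℱ).app (op U₀) s₀))
    rw [e3, hp, Stmt2Aux.hom_eq g.op (homOfLE (leOfHom g)).op]
    exact Stmt2Aux.pmap_trans G.val (leOfHom g) hle2 hUV t
  choose Uf sf hUVf hyUf htf using step1
  haveI hnoe : TopologicalSpace.NoetherianSpace ((TopCat.of (Y : Set X)) : Type _) :=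
    TopologicalSpace.NoetherianSpace.set Y
  have hcomp : IsCompact (V : Set (TopCat.of (Y : Set X))) :=
    TopologicalSpace.NoetherianSpace.isCompact _
  have hcov : (V : Set (TopCat.of (Y : Set X))) ⊆
      ⋃ i : {y // y ∈ V}, ((Opens.map (subsetIncl X Y)).obj (Uf i) : Set (TopCat.of (Y : Set X))) := by
    intro y hy
    exact Set.mem_iUnion.mpr ⟨⟨y, hy⟩, hyUf ⟨y, hy⟩⟩
  obtain ⟨ts, hts⟩ := hcomp.elim_finite_subcover
    (fun i => ((Opens.map (subsetIncl X Y)).obj (Uf i) : Set (TopCat.of (Y : Set X))))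
    (fun i => ((Opens.map (subsetIncl X Y)).obj (Uf i)).isOpen) hcov
  -- restriction identity
  have hrestrict : ∀ (i : {y // y ∈ V}) (U' : Opens X) (hU' : U' ≤ Uf i)
      (hUV' : (Opens.map (subsetIncl X Y)).obj U' ≤ V),
      θ.app (op ((Opens.map (subsetIncl X Y)).obj U'))
        ((Stmt2Aux.ηu Y ℱ).app (op U') (ℱ.map (homOfLE hU').op (sf i)))
      = G.val.map (homOfLE hUV').op t := by
    intro i U' hU' hUV'
    have hle : (Opens.map (subsetIncl X Y)).obj U' ≤ (Opens.map (subsetIncl X Y)).obj (Uf i) :=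
      leOfHom ((Opens.map (subsetIncl X Y)).map (homOfLE hU'))
    have e1 : (Stmt2Aux.ηu Y ℱ).app (op U') (ℱ.map (homOfLE hU').op (sf i))
        = Pp.map (homOfLE hle).op ((Stmt2Aux.ηu Y ℱ).app (op (Uf i)) (sf i)) := by
      have h0 := Stmt2Aux.unit_res ℱ (Uf i) U' hU'
        ((Opens.map (subsetIncl X Y)).obj U') le_rfl hle (sf i)
      rw [Stmt2Aux.pmap_id] at h0
      exact h0.symm
    rw [e1, Stmt2Aux.app_nat θ (homOfLE hle).op
      ((Stmt2Aux.ηu Y ℱ).app (op (Uf i)) (sf i)), htf i]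
    exact Stmt2Aux.pmap_trans G.val (hUVf i) hle hUV' t
  -- agreement sets
  let Ov : {y // y ∈ V} → {y // y ∈ V} → Opens X := fun i j => Uf i ⊓ Uf j
  let sL : ∀ i j, ℱ.obj (op (Ov i j)) := fun i j => ℱ.map (homOfLE inf_le_left).op (sf i)
  let sR : ∀ i j, ℱ.obj (op (Ov i j)) := fun i j => ℱ.map (homOfLE inf_le_right).op (sf j)
  let Ee : {y // y ∈ V} → {y // y ∈ V} → Set X := fun i j =>
    {x | ∃ hx : x ∈ Ov i j, ℱ.germ (Ov i j) x hx (sL i j) = ℱ.germ (Ov i j) x hx (sR i j)}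
  have hEopen : ∀ i j, IsOpen (Ee i j) := by
    intro i j
    rw [isOpen_iff_forall_mem_open]
    rintro x ⟨hx, hgerm⟩
    obtain ⟨W', hxW', iU, iV, heqW⟩ := ℱ.germ_eq x hx hx (sL i j) (sR i j) hgerm
    rw [Stmt2Aux.hom_eq' iV iU] at heqW
    refine ⟨(W' : Set X), ?_, W'.isOpen, hxW'⟩
    intro z hz
    refine ⟨leOfHom iU hz, ?_⟩
    have hc := congrArg (fun q => ℱ.germ W' z hz q) heqW
    exact (ℱ.germ_res_apply iU z hz (sL i j)).symm.trans
      (hc.trans (ℱ.germ_res_apply iU z hz (sR i j)))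
  have hEsub : ∀ i j, (Ov i j : Set X) ∩ Y ⊆ Ee i j := by
    intro i j x hx
    have hUVo : (Opens.map (subsetIncl X Y)).obj (Ov i j) ≤ V :=
      (leOfHom ((Opens.map (subsetIncl X Y)).map (homOfLE (inf_le_left : Ov i j ≤ Uf i)))).trans
        (hUVf i)
    have heq : θ.app (op ((Opens.map (subsetIncl X Y)).obj (Ov i j)))
          ((Stmt2Aux.ηu Y ℱ).app (op (Ov i j)) (sL i j))
        = θ.app (op ((Opens.map (subsetIncl X Y)).obj (Ov i j)))
          ((Stmt2Aux.ηu Y ℱ).app (op (Ov i j)) (sR i j)) := by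
      rw [hrestrict i (Ov i j) inf_le_left hUVo, hrestrict j (Ov i j) inf_le_right hUVo]
    have hsieve := CategoryTheory.Presheaf.equalizerSieve_mem J θ _ _ heq
    obtain ⟨V'', g, hg, hy''⟩ := hsieve ⟨x, hx.2⟩ hx.1
    obtain ⟨ψ, hψ⟩ := Stmt2Aux.exists_desc ℱ V'' ⟨x, hx.2⟩ hy''
    have hgle : V'' ≤ (Opens.map (subsetIncl X Y)).obj (Ov i j) := leOfHom g
    have hg' : Pp.map g.op ((Stmt2Aux.ηu Y ℱ).app (op (Ov i j)) (sL i j))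
        = Pp.map g.op ((Stmt2Aux.ηu Y ℱ).app (op (Ov i j)) (sR i j)) := hg
    rw [Stmt2Aux.hom_eq g.op (homOfLE hgle).op] at hg'
    have hgerm := congrArg (fun q => ψ q) hg'
    simp only at hgerm
    rw [hψ (Ov i j) hgle (sL i j), hψ (Ov i j) hgle (sR i j)] at hgerm
    exact ⟨hx.1, hgerm⟩
  have hclo : ∀ i j, closure ((Ov i j : Set X) \ Ee i j) ∩ Y = ∅ := fun i j =>
    Stmt2Aux.core_topo Y hY (Ov i j : Set X) (Ee i j) (Ov i j).isOpen (hEopen i j) (hEsub i j)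
  -- the open set avoiding all the bad closed sets
  have hOcopen : IsOpen (⋂ i ∈ ts, ⋂ j ∈ ts, (closure ((Ov i j : Set X) \ Ee i j))ᶜ) := by
    refine isOpen_biInter_finset fun i _ => ?_
    refine isOpen_biInter_finset fun j _ => ?_
    exact isOpen_compl_iff.mpr isClosed_closure
  let Oc : Opens X := ⟨_, hOcopen⟩
  have hYOc : ∀ x : X, x ∈ Y → x ∈ Oc := by
    intro x hxY
    refine Set.mem_iInter₂.mpr fun i _ => Set.mem_iInter₂.mpr fun j _ => fun hc =>
      Set.eq_empty_iff_forall_notMem.mp (hclo i j) x ⟨hc, hxY⟩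
  let U2 : {y // y ∈ V} → Opens X := fun i => Uf i ⊓ Oc
  have hpre : ∀ i, (Opens.map (subsetIncl X Y)).obj (U2 i)
      = (Opens.map (subsetIncl X Y)).obj (Uf i) := by
    intro i
    apply TopologicalSpace.Opens.ext
    ext z
    exact ⟨fun hz => hz.1, fun hz => ⟨hz, hYOc z.1 z.2⟩⟩
  let sf2 : ∀ i : {i // i ∈ ts}, ℱ.obj (op (U2 i.1)) := fun i =>
    ℱ.map (homOfLE inf_le_left).op (sf i.1)
  have hcompat : ∀ (i j : {i // i ∈ ts}),
      ℱ.map (Opens.infLELeft (U2 i.1) (U2 j.1)).op (sf2 i)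
        = ℱ.map (Opens.infLERight (U2 i.1) (U2 j.1)).op (sf2 j) := by
    intro i j
    apply TopCat.Presheaf.section_ext F
    intro x hx
    have hxO : x ∈ Ov i.1 j.1 := ⟨hx.1.1, hx.2.1⟩
    have hxOc : x ∈ (⋂ i' ∈ ts, ⋂ j' ∈ ts, (closure ((Ov i' j' : Set X) \ Ee i' j'))ᶜ) := hx.1.2
    have hnc : x ∉ closure ((Ov i.1 j.1 : Set X) \ Ee i.1 j.1) :=
      Set.mem_iInter₂.mp (Set.mem_iInter₂.mp hxOc i.1 i.2) j.1 j.2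
    have hxE : x ∈ Ee i.1 j.1 :=
      Classical.byContradiction fun h => hnc (subset_closure ⟨hxO, h⟩)
    obtain ⟨hx', hgerm⟩ := hxE
    have hDO : U2 i.1 ⊓ U2 j.1 ≤ Ov i.1 j.1 := fun z hz => ⟨hz.1.1, hz.2.1⟩
    have hDUi : U2 i.1 ⊓ U2 j.1 ≤ Uf i.1 := fun z hz => hz.1.1
    have hDUj : U2 i.1 ⊓ U2 j.1 ≤ Uf j.1 := fun z hz => hz.2.1
    have eL : ℱ.map (Opens.infLELeft (U2 i.1) (U2 j.1)).op (sf2 i)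
        = ℱ.map (homOfLE hDO).op (sL i.1 j.1) := by
      rw [Stmt2Aux.hom_eq' (Opens.infLELeft (U2 i.1) (U2 j.1)) (homOfLE inf_le_left)]
      rw [Stmt2Aux.pmap_trans ℱ inf_le_left inf_le_left hDUi (sf i.1)]
      rw [Stmt2Aux.pmap_trans ℱ inf_le_left hDO hDUi (sf i.1)]
    have eR : ℱ.map (Opens.infLERight (U2 i.1) (U2 j.1)).op (sf2 j)
        = ℱ.map (homOfLE hDO).op (sR i.1 j.1) := by
      rw [Stmt2Aux.hom_eq' (Opens.infLERight (U2 i.1) (U2 j.1)) (homOfLE inf_le_right)]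
      rw [Stmt2Aux.pmap_trans ℱ inf_le_left inf_le_right hDUj (sf j.1)]
      rw [Stmt2Aux.pmap_trans ℱ inf_le_right hDO hDUj (sf j.1)]
    rw [eL, eR]
    exact (TopCat.Presheaf.germ_res_apply ℱ (homOfLE hDO) x hx (sL i.1 j.1)).trans
      (hgerm.trans (TopCat.Presheaf.germ_res_apply ℱ (homOfLE hDO) x hx (sR i.1 j.1)).symm)
  obtain ⟨sG, hsG, -⟩ := F.existsUnique_gluing (fun i : {i // i ∈ ts} => U2 i.1)
    (fun i => sf2 i) hcompat
  obtain ⟨sT, hsT⟩ := hF (iSup fun i : {i // i ∈ ts} => U2 i.1) sG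
  have htople : (⊤ : Opens (TopCat.of (Y : Set X)))
      ≤ (Opens.map (subsetIncl X Y)).obj ⊤ := fun z _ => trivial
  refine ⟨θ.app (op ⊤) (Pp.map (homOfLE htople).op
    ((Stmt2Aux.ηu Y ℱ).app (op (⊤ : Opens X)) sT)), ?_⟩
  have hcover : V ≤ iSup (fun i : {i // i ∈ ts} =>
      (Opens.map (subsetIncl X Y)).obj (Uf i.1)) := by
    intro z hz
    obtain ⟨i, hmem⟩ := Set.mem_iUnion.mp (hts hz)
    obtain ⟨hi, hzi⟩ := Set.mem_iUnion.mp hmem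
    exact TopologicalSpace.Opens.mem_iSup.mpr ⟨⟨i, hi⟩, hzi⟩
  apply G.eq_of_locally_eq' (fun i : {i // i ∈ ts} =>
    (Opens.map (subsetIncl X Y)).obj (Uf i.1)) V (fun i => homOfLE (hUVf i.1)) hcover
  intro i
  set xT := Pp.map (homOfLE htople).op ((Stmt2Aux.ηu Y ℱ).app (op (⊤ : Opens X)) sT) with hxT
  have h5 : (Opens.map (subsetIncl X Y)).obj (Uf i.1)
      ≤ (Opens.map (subsetIncl X Y)).obj (U2 i.1) := le_of_eq (hpre i.1).symm
  have h4 : (Opens.map (subsetIncl X Y)).obj (Uf i.1)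
      ≤ (Opens.map (subsetIncl X Y)).obj (iSup fun i : {i // i ∈ ts} => U2 i.1) :=
    h5.trans (leOfHom ((Opens.map (subsetIncl X Y)).map (homOfLE (le_iSup (fun i : {i // i ∈ ts} => U2 i.1) i))))
  have h3 : (Opens.map (subsetIncl X Y)).obj (Uf i.1)
      ≤ (Opens.map (subsetIncl X Y)).obj ⊤ := fun z _ => trivial
  have c1 := Stmt2Aux.pmap_trans G.val (le_top : V ≤ ⊤) (hUVf i.1)
    ((hUVf i.1).trans le_top) (θ.app (op ⊤) xT)
  rw [c1]
  have c2 := Stmt2Aux.app_nat θ (homOfLE ((hUVf i.1).trans le_top)).op xT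
  rw [← c2, hxT]
  have c3 := Stmt2Aux.pmap_trans Pp htople ((hUVf i.1).trans le_top) h3
    ((Stmt2Aux.ηu Y ℱ).app (op (⊤ : Opens X)) sT)
  rw [c3]
  have c4 := Stmt2Aux.unit_res ℱ ⊤ (iSup fun i : {i // i ∈ ts} => U2 i.1) le_top
    ((Opens.map (subsetIncl X Y)).obj (Uf i.1)) h4 h3 sT
  rw [c4, hsT]
  have c5 := Stmt2Aux.unit_res ℱ (iSup fun i : {i // i ∈ ts} => U2 i.1) (U2 i.1)
    (le_iSup (fun i : {i // i ∈ ts} => U2 i.1) i) ((Opens.map (subsetIncl X Y)).obj (Uf i.1)) h5 h4 sG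
  rw [c5]
  have hsGi : ℱ.map (homOfLE (le_iSup (fun i : {i // i ∈ ts} => U2 i.1) i)).op sG = sf2 i := by
    rw [Stmt2Aux.hom_eq' (homOfLE (le_iSup (fun i : {i // i ∈ ts} => U2 i.1) i))
      (TopologicalSpace.Opens.leSupr (fun i : {i // i ∈ ts} => U2 i.1) i)]
    exact hsG i
  rw [hsGi]
  have c6 := Stmt2Aux.unit_res ℱ (Uf i.1) (U2 i.1) inf_le_left
    ((Opens.map (subsetIncl X Y)).obj (Uf i.1)) h5
    (le_refl ((Opens.map (subsetIncl X Y)).obj (Uf i.1))) (sf i.1)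
  rw [← c6, Stmt2Aux.pmap_id]
  exact htf i.1
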